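/- Let Z(Y,X) be the zoom space of a Tychonoff space Y with respect to a family X = (X_i)_{i∈I_Y} of nonempty Tychonoff spaces. Then: (i) Z(Y,X) is Tychonoff, Y is a quotient of Z(Y,X), each X_i is homeomorphic to a clopen subspace of Z(Y,X), and for every selector s (choosing a point s(i) ∈ X_i for each i ∈ I_Y) the set (Y∖I_Y) ∪ s(I_Y) is a closed subspace of Z(Y,X) homeomorphic to Y; (ii) if Y is a dense subspace of Ỹ and each X_i is a (dense) subspace of X̃_i, then Z(Y,X) is a (dense) subspace of Z(Ỹ,X̃); (iii) if Y and all X_i are compact (respectively Lindelöf), then Z(Y,X) is compact (respectively Lindelöf); (iv) if cY is a compactification of Y and each cX_i is a compactification of X_i, then Z(cY, (cX_i)_i) is a compactification of Z(Y,X). -/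

import Mathlib

noncomputable section
open Classical Set Topology Filter Ordinal

universe u v

namespace FBorelPaper

/-! ### Ordinal parity -/

/-- The first uncountable ordinal. -/
def omega1 : Ordinal.{0} := Ordinal.omega 1

/-- An ordinal `a = λ + m` (with `λ` limit or zero, `m < ω`) is *even* iff `m` is even. -/
def EvenOrd (a : Ordinal.{0}) : Prop := a % 2 = 0

/-- An ordinal `a = λ + m` (with `λ` limit or zero, `m < ω`) is *odd* iff `m` is odd. -/
def OddOrd (a : Ordinal.{0}) : Prop := a % 2 = 1

/-- For `a = λ + 2n + i` (with `λ` limit or zero, `n < ω`, `i ∈ {0,1}`),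
`ordPrime a = λ + n` (the ordinal `α'` of the paper). -/
def ordPrime (a : Ordinal.{0}) : Ordinal.{0} :=
  Ordinal.omega0 * (a / Ordinal.omega0) + (a % Ordinal.omega0) / 2

/-! ### The F-Borel hierarchy -/

/-- The `F`-Borel hierarchy of a topological space: `FBorel Y 0` is the family of closed
sets, and for `0 < a`, `FBorel Y a` consists of all countable unions (for odd `a`),
resp. countable intersections (for even `a`), of members of `⋃ b < a, FBorel Y b`. -/
def FBorel (Y : Type u) [TopologicalSpace Y] : Ordinal.{0} → Set (Set Y) :=
  WellFounded.fix Ordinal.lt_wf (C := fun _ => Set (Set Y)) fun a ih =>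
    if a = 0 then { F | IsClosed F }
    else if EvenOrd a then
      { S | ∃ f : ℕ → Set Y, (∀ n, ∃ b, ∃ h : b < a, f n ∈ ih b h) ∧ S = ⋂ n, f n }
    else
      { S | ∃ f : ℕ → Set Y, (∀ n, ∃ b, ∃ h : b < a, f n ∈ ih b h) ∧ S = ⋃ n, f n }

/-- The list `(σ 0, …, σ (k-1))` of the first `k` values of `σ : ℕ → ℕ`. -/
def seqPrefix (σ : ℕ → ℕ) (k : ℕ) : List ℕ := List.ofFn fun i : Fin k => σ i

/-- A Suslin scheme: a monotone family of sets indexed by finite sequences. -/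
def IsSuslinScheme {Y : Type u} (C : List ℕ → Set Y) : Prop :=
  ∀ ⦃s t : List ℕ⦄, s <+: t → C t ⊆ C s

/-- The Suslin operation `A(C) = ⋃_{σ ∈ ω^ω} ⋂_k C(σ|k)`. -/
def suslinOp {Y : Type u} (C : List ℕ → Set Y) : Set Y :=
  ⋃ σ : ℕ → ℕ, ⋂ k : ℕ, C (seqPrefix σ k)

/-- The Suslin-F subsets of `Y`: results of the Suslin operation applied to schemes of
closed sets. -/
def SuslinF (Y : Type u) [TopologicalSpace Y] : Set (Set Y) :=
  { S | ∃ C : List ℕ → Set Y, (∀ s, IsClosed (C s)) ∧ S = suslinOp C }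

/-- The classes `F_a(Y)` for `a ≤ ω₁`, where `F_{ω₁}(Y)` is the class of Suslin-F sets. -/
def FClass (Y : Type u) [TopologicalSpace Y] (a : Ordinal.{0}) : Set (Set Y) :=
  if a < omega1 then FBorel Y a else SuslinF Y

/-- `ComplIn Y X` is the complexity of `X` in `Y`: the least `a ≤ ω₁` with `X ∈ F_a(Y)`. -/
def ComplIn (Y : Type u) [TopologicalSpace Y] (X : Set Y) : Ordinal.{0} :=
  sInf { a : Ordinal.{0} | a ≤ omega1 ∧ X ∈ FClass Y a }

/-! ### Compactifications, K-analytic spaces, local complexity -/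

/-- `(K, e)` is a compactification of `X`: `K` is compact Hausdorff and `e` is a dense
embedding of `X` into `K`. -/
def IsCompactification (X : Type u) [TopologicalSpace X] (K : Type u) [TopologicalSpace K]
    (e : X → K) : Prop :=
  CompactSpace K ∧ T2Space K ∧ IsEmbedding e ∧ DenseRange e

/-- The set `Compl(X)` of all complexities attained by `X` in its compactifications. -/
def AttainedCompl (X : Type u) [TopologicalSpace X] : Set Ordinal.{0} :=
  { γ | ∃ (K : Type u) (_ : TopologicalSpace K) (e : X → K),
      IsCompactification X K e ∧ Set.range e ∈ SuslinF K ∧ γ = ComplIn K (Set.range e) }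

/-- A topological space is K-analytic iff it embeds as a Suslin-F subset of some compact
Hausdorff space. -/
def IsKAnalytic (X : Type u) [TopologicalSpace X] : Prop :=
  ∃ (K : Type u) (_ : TopologicalSpace K) (e : X → K),
    CompactSpace K ∧ T2Space K ∧ IsEmbedding e ∧ Set.range e ∈ SuslinF K

/-- The local complexity `Compl_y(X, Y)`: the least complexity of `cl(U) ∩ X` in `Y` over
all open neighborhoods `U` of `y` in `Y`. -/
def locComplAt (Y : Type u) [TopologicalSpace Y] (X : Set Y) (y : Y) : Ordinal.{0} :=
  sInf { γ : Ordinal.{0} | ∃ U : Set Y, IsOpen U ∧ y ∈ U ∧ γ = ComplIn Y (closure U ∩ X) }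

/-- The local complexity `Compl_loc(X, Y) = sup_{x ∈ X} Compl_x(X, Y)`. -/
def locCompl (Y : Type u) [TopologicalSpace Y] (X : Set Y) : Ordinal.{0} :=
  ⨆ x : X, locComplAt Y X (x : Y)

/-- The local complexity `Compl_locbar(X, Y) = sup_{y ∈ Y} Compl_y(X, Y)`. -/
def locComplBar (Y : Type u) [TopologicalSpace Y] (X : Set Y) : Ordinal.{0} :=
  ⨆ y : Y, locComplAt Y X y

/-! ### Trees on ω -/

/-- A tree on `ω`: a set of finite sequences closed under initial segments. -/
def IsTree (T : Set (List ℕ)) : Prop := ∀ ⦃s t : List ℕ⦄, s <+: t → t ∈ T → s ∈ T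

/-- A tree is well-founded iff it carries no infinite branch. -/
def WellFoundedTree (T : Set (List ℕ)) : Prop := ¬ ∃ σ : ℕ → ℕ, ∀ k : ℕ, seqPrefix σ k ∈ T

/-- `t` is a leaf of `T`: it belongs to `T` and has no immediate successor in `T`. -/
def IsLeafOf (T : Set (List ℕ)) (t : List ℕ) : Prop := t ∈ T ∧ ∀ n : ℕ, t ++ [n] ∉ T

/-- The tree `T^t = {s | t⌢s ∈ T}` corresponding to `t` in `T`. -/
def subtreeAt (T : Set (List ℕ)) (t : List ℕ) : Set (List ℕ) := { s | t ++ s ∈ T }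

/-- The smallest tree containing a set `S` of finite sequences. -/
def clTr (S : Set (List ℕ)) : Set (List ℕ) := { u | ∃ s ∈ S, u <+: s }

/-- The leaf derivative: keep the elements having some proper extension in `T`. -/
def leafDeriv (T : Set (List ℕ)) : Set (List ℕ) := { t ∈ T | ∃ s ∈ T, t <+: s ∧ t ≠ s }

/-- The derivative `D_iie`: keep the `t ∈ T` admitting infinitely many pairwise
incomparable extensions in `T` of pairwise different lengths. -/
def Diie (T : Set (List ℕ)) : Set (List ℕ) :=
  { t ∈ T | ∃ g : ℕ → List ℕ, (∀ n, g n ∈ T ∧ t <+: g n) ∧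
      ∀ ⦃m n : ℕ⦄, m < n →
        (¬ g m <+: g n) ∧ (¬ g n <+: g m) ∧ (g m).length ≠ (g n).length }

/-- Transfinitely iterated derivative, starting from `cl_Tr S` and taking intersections
at limit stages. -/
def iterDeriv (D : Set (List ℕ) → Set (List ℕ)) (S : Set (List ℕ)) (γ : Ordinal.{0}) :
    Set (List ℕ) :=
  Ordinal.limitRecOn γ (clTr S) (fun _ ih => D ih)
    (fun a _ ih => ⋂ b : Ordinal.{0}, ⋂ h : b < a, ih b h)

/-- The rank associated with the leaf derivative: the least `γ` such that the `(γ+1)`-st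
iterated leaf derivative is empty, and `ω₁` if there is no such countable ordinal. -/
def leafRank (T : Set (List ℕ)) : Ordinal.{0} :=
  if ∃ γ : Ordinal.{0}, γ < omega1 ∧ iterDeriv leafDeriv T (γ + 1) = ∅ then
    sInf { γ : Ordinal.{0} | iterDeriv leafDeriv T (γ + 1) = ∅ }
  else omega1

/-- `E` is the canonical extension of the `l(T)`-scheme `H` to the whole of `T`:
it agrees with `H` on the leaves of `T`, and at a non-leaf `t ∈ T` it is the union
(resp. the intersection) of its values at the immediate successors of `t` in `T` when
the leaf-rank of `T^t` is odd (resp. even). -/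
def IsSchemeExtension (Y : Type u) [TopologicalSpace Y] (T : Set (List ℕ))
    (H E : List ℕ → Set Y) : Prop :=
  (∀ t, IsLeafOf T t → E t = H t) ∧
  (∀ t ∈ T, ¬ IsLeafOf T t → OddOrd (leafRank (subtreeAt T t)) →
      E t = ⋃ n ∈ { n : ℕ | t ++ [n] ∈ T }, E (t ++ [n])) ∧
  (∀ t ∈ T, ¬ IsLeafOf T t → EvenOrd (leafRank (subtreeAt T t)) →
      E t = ⋂ n ∈ { n : ℕ | t ++ [n] ∈ T }, E (t ++ [n]))

/-- `H` (an `l(T)`-scheme of subsets of `X`) is a *universal simple `F_α`-representation*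
of `X`: `r_l(T) ≤ α`, and for every space `Y` containing (a copy of) `X`, the extension
of the scheme of closures `(cl_Y (H t))_t` computes `X` at the root. -/
def HasUniversalSimpleRep (X : Type u) [TopologicalSpace X] (α : Ordinal.{0}) : Prop :=
  ∃ (T : Set (List ℕ)) (H : List ℕ → Set X), IsTree T ∧ WellFoundedTree T ∧ [] ∈ T ∧
    leafRank T ≤ α ∧
    ∀ (Y : Type u) (_ : TopologicalSpace Y) (e : X → Y), IsEmbedding e →
      ∃ E : List ℕ → Set Y,
        IsSchemeExtension Y T (fun t => closure (e '' H t)) E ∧ E [] = Set.range e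

/-! ### Canonical trees -/

/-- Auxiliary indices for the canonical trees: at a successor `a = b + 1` every index is
`b`, and at a countable limit the indices enumerate all ordinals `< a` injectively. -/
def canonIdx (a : Ordinal.{0}) (n : ℕ) : Ordinal.{0} :=
  if hs : ∃ b, a = b + 1 then hs.choose
  else if hf : ∃ f : ℕ → Ordinal.{0}, Function.Injective f ∧ Set.range f = Set.Iio a then
    hf.choose n
  else 0

theorem canonIdx_lt {a : Ordinal.{0}} (h0 : a ≠ 0) (n : ℕ) : canonIdx a n < a := by
  unfold canonIdx
  split
  · next hs =>
      conv_rhs => rw [hs.choose_spec]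
      rw [Ordinal.add_one_eq_succ]
      exact Order.lt_succ _
  · split
    · next hf =>
        have hmem : hf.choose n ∈ Set.range hf.choose := Set.mem_range_self n
        rw [hf.choose_spec.2] at hmem
        exact hmem
    · first
        | exact pos_iff_ne_zero.mpr h0
        | exact lt_of_le_of_ne (zero_le _) (Ne.symm h0)
        | exact Ordinal.pos_iff_ne_zero.mpr h0

/-- The canonical "maximal" trees `T_α` of leaf-rank `α < ω₁` (with `T_α = ω^{<ω}` for
`α ≥ ω₁`): `T_0 = {∅}`, `T_{α+1} = {∅} ∪ ⋃_n n⌢T_α`, and at countable limits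
`T_α = {∅} ∪ ⋃_n n⌢T_{π_α(n)}` for an injective enumeration `π_α` of `α`. -/
def canonTree : Ordinal.{0} → Set (List ℕ) :=
  WellFounded.fix Ordinal.lt_wf (C := fun _ => Set (List ℕ)) fun a ih =>
    if h0 : a = 0 then {([] : List ℕ)}
    else if omega1 ≤ a then Set.univ
    else {([] : List ℕ)} ∪ ⋃ n : ℕ, (List.cons n) '' ih (canonIdx a n) (canonIdx_lt h0 n)

/-- The canonical trees `T^c_α`: `T_{α'}` for even `α`, and `{∅} ∪ 1⌢T_{α'}` for odd `α`. -/
def canonTreeC (a : Ordinal.{0}) : Set (List ℕ) :=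
  if EvenOrd a then canonTree (ordPrime a)
  else {([] : List ℕ)} ∪ (List.cons 1) '' canonTree (ordPrime a)

/-- The canonical trees `T^c_{α,i} = {∅} ∪ i⌢T_{α'}` (for odd `α`). -/
def canonTreeCi (a : Ordinal.{0}) (i : ℕ) : Set (List ℕ) :=
  {([] : List ℕ)} ∪ (List.cons i) '' canonTree (ordPrime a)

/-! ### Admissible maps, `R_T` and regular representations -/

/-- An admissible map on a tree `T`: monotone w.r.t. extension, with
`|φ(t)| = t(0) + ⋯ + t(|t|-1)` for all `t ∈ T`. -/
def Admissible (T : Set (List ℕ)) (φ : List ℕ → List ℕ) : Prop :=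
  (∀ ⦃s t : List ℕ⦄, s ∈ T → t ∈ T → s <+: t → φ s <+: φ t) ∧
  (∀ t ∈ T, (φ t).length = t.sum)

/-- `R_T(C)`: the points of `C(∅)` admitting an admissible witness map along `T`. -/
def RT {Y : Type u} (T : Set (List ℕ)) (C : List ℕ → Set Y) : Set Y :=
  { x | x ∈ C [] ∧ ∃ φ : List ℕ → List ℕ, Admissible T φ ∧ ∀ t ∈ T, x ∈ C (φ t) }

/-- `R_α(C) = R_{T^c_α}(C)`. -/
def Ralpha {Y : Type u} (a : Ordinal.{0}) (C : List ℕ → Set Y) : Set Y :=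
  RT (canonTreeC a) C

/-- A Suslin scheme `C` of subsets of `X ⊆ Y` is *complete on `X`*: it is a Suslin scheme
on `X` (it consists of subsets of `X` and the Suslin operation applied to it covers `X`)
such that every nontrivial filter containing, for each `n`, a set `C s` with `|s| = n`,
has an accumulation point in `X`. -/
def IsCompleteOn (Y : Type u) [TopologicalSpace Y] (X : Set Y) (C : List ℕ → Set Y) :
    Prop :=
  IsSuslinScheme C ∧ (∀ s, C s ⊆ X) ∧ X ⊆ suslinOp C ∧
  ∀ F : Filter Y, F.NeBot → (∀ n : ℕ, ∃ s : List ℕ, s.length = n ∧ C s ∈ F) →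
    ∃ x ∈ X, ClusterPt x F

/-- The tree `S_C(y)` of finite sequences `s` with `y ∈ cl_Y (C s)`. -/
def SCtree (Y : Type u) [TopologicalSpace Y] (C : List ℕ → Set Y) (y : Y) :
    Set (List ℕ) :=
  { s : List ℕ | y ∈ closure (C s) }

/-! ### Zoom spaces -/

/-- The set of isolated points of a topological space. -/
def IsolPts (Y : Type u) [TopologicalSpace Y] : Set Y := { y | IsOpen ({y} : Set Y) }

/-- The underlying set of the zoom space `Z(Y, X)`: the non-isolated points of `Y`
together with the disjoint union of the spaces `X i`, `i ∈ I_Y`. -/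
def ZoomCarrier (Y : Type u) [TopologicalSpace Y] (X : IsolPts Y → Type v) :
    Type (max u v) :=
  ({ y : Y // y ∉ IsolPts Y }) ⊕ ((i : IsolPts Y) × X i)

/-- The basic set `V_U ⊆ Z(Y, X)` associated with `U ⊆ Y`:
`V_U = (U ∖ I_Y) ∪ ⋃ {X i | i ∈ U ∩ I_Y}`. -/
def zoomVSet (Y : Type u) [TopologicalSpace Y] (X : IsolPts Y → Type v) (U : Set Y) :
    Set (ZoomCarrier Y X) :=
  { z | Sum.elim (fun y : { y : Y // y ∉ IsolPts Y } => (y : Y) ∈ U)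
      (fun p : (i : IsolPts Y) × X i => (p.1 : Y) ∈ U) z }

/-- The topology of the zoom space `Z(Y, X)`, generated by the open subsets of the
spaces `X i` together with the sets `V_U` for `U` open in `Y`. -/
instance zoomTopology (Y : Type u) [TopologicalSpace Y] (X : IsolPts Y → Type v)
    [∀ i, TopologicalSpace (X i)] : TopologicalSpace (ZoomCarrier Y X) :=
  TopologicalSpace.generateFrom
    ({ B | ∃ (i : IsolPts Y) (W : Set (X i)), IsOpen W ∧
        B = Sum.inr '' ((Sigma.mk i) '' W) } ∪
     { B | ∃ U : Set Y, IsOpen U ∧ B = zoomVSet Y X U })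

/-- The subset of `Z(Y, X)` which is the underlying set of the zoom space `Z(Ys, A)` of
a subspace `Ys ⊆ Y` with respect to subspaces `A i ⊆ X i`
(here the isolated points of `Ys` are identified with those of `Y`). -/
def zoomSub (Y : Type u) [TopologicalSpace Y] (X : IsolPts Y → Type v) (Ys : Set Y)
    (A : ∀ i : IsolPts Y, Set (X i)) : Set (ZoomCarrier Y X) :=
  { z | Sum.elim (fun y : { y : Y // y ∉ IsolPts Y } => (y : Y) ∈ Ys)
      (fun p : (i : IsolPts Y) × X i => p.2 ∈ A p.1) z }

/-! ### Broom sets and broom spaces -/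

/-- A forking sequence: a sequence of nonempty finite sequences with pairwise distinct
first entries. -/
def IsForking (f : ℕ → List ℕ) : Prop :=
  (∀ n, f n ≠ []) ∧ ∀ ⦃m n : ℕ⦄, m ≠ n → (f m).head? ≠ (f n).head?

/-- The hierarchy of finite broom sets: `B ∈ B_α` iff `IsBroomB α B`.
`B_0 = {{∅}}`; for odd `α`, `B_α = B_{<α} ∪ {h⌢B | B ∈ B_{α-1}, h ∈ ω^{<ω}}`; for even
`α > 0`, `B_α = B_{<α} ∪ {⋃_n f_n⌢B_n | B_n ∈ B_{<α}, (f_n) a forking sequence}`. -/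
inductive IsBroomB : Ordinal.{0} → Set (List ℕ) → Prop
  | base : IsBroomB 0 {[]}
  | mono {β α : Ordinal.{0}} {B : Set (List ℕ)} : β < α → IsBroomB β B → IsBroomB α B
  | odd {β : Ordinal.{0}} {B : Set (List ℕ)} (h : List ℕ) : EvenOrd β → IsBroomB β B →
      IsBroomB (β + 1) ((fun s => h ++ s) '' B)
  | even {α : Ordinal.{0}} {f : ℕ → List ℕ} {Bs : ℕ → Set (List ℕ)}
      (g : ℕ → Ordinal.{0}) :
      0 < α → EvenOrd α → IsForking f →
      (∀ n : ℕ, g n < α) → (∀ n : ℕ, IsBroomB (g n) (Bs n)) →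
      IsBroomB α (⋃ n : ℕ, (fun s => f n ++ s) '' Bs n)

/-- The infinite sequence `s⌢ν` obtained by extending the finite sequence `s` by `ν`. -/
def seqAppend (s : List ℕ) (ν : ℕ → ℕ) : ℕ → ℕ :=
  fun k => if h : k < s.length then s.get ⟨k, h⟩ else ν (k - s.length)

/-- `A` is a broom-extension of `B`:
`A = {s⌢f^s_n⌢ν^s_n | s ∈ B, n ∈ ω}` for forking sequences `(f^s_n)_n, s ∈ B`, and
points `ν^s_n ∈ ω^ω`. -/
def IsBroomExtension (B : Set (List ℕ)) (A : Set (ℕ → ℕ)) : Prop :=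
  ∃ (f : List ℕ → ℕ → List ℕ) (ν : List ℕ → ℕ → (ℕ → ℕ)),
    (∀ s ∈ B, IsForking (f s)) ∧
    A = { σ : ℕ → ℕ | ∃ s ∈ B, ∃ n : ℕ, σ = seqAppend (s ++ f s n) (ν s n) }

/-- The hierarchy of infinite broom sets: `A ∈ A_α` iff `A` is a broom-extension of some
`B ∈ B_α`. -/
def IsBroomA (α : Ordinal.{0}) (A : Set (ℕ → ℕ)) : Prop :=
  ∃ B : Set (List ℕ), IsBroomB α B ∧ IsBroomExtension B A

/-- `u` is a finite initial segment of the infinite sequence `σ`. -/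
def InfExtends (u : List ℕ) (σ : ℕ → ℕ) : Prop := seqPrefix σ u.length = u

/-- The tree of all finite initial segments of members of a set of infinite sequences. -/
def clTrInf (S : Set (ℕ → ℕ)) : Set (List ℕ) := { u | ∃ σ ∈ S, InfExtends u σ }

/-- The broom space `T_𝒜` on `ω^ω ∪ {∞}` (with `∞ = none`): every point of `ω^ω` is
isolated, and the neighborhood subbasis at `∞` consists of the complements of single
points of `ω^ω` and of the complements of the sets `A ∈ 𝒜`. -/
def broomTop (𝒜 : Set (Set (ℕ → ℕ))) : TopologicalSpace (Option (ℕ → ℕ)) :=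
  TopologicalSpace.generateFrom
    ({ S | ∃ σ : ℕ → ℕ, S = {Option.some σ} } ∪
     { S | ∃ σ : ℕ → ℕ, S = insert Option.none (Option.some '' ({σ}ᶜ)) } ∪
     { S | ∃ A ∈ 𝒜, S = insert Option.none (Option.some '' Aᶜ) })

/-! ### Helper development for zoom spaces -/

section ZoomHelpers

variable {Y : Type u} [TopologicalSpace Y] {X : IsolPts Y → Type v}
  [∀ i, TopologicalSpace (X i)]

/-- The generating family of the zoom topology. -/
def zoomGens (Y : Type u) [TopologicalSpace Y] (X : IsolPts Y → Type v)
    [∀ i, TopologicalSpace (X i)] : Set (Set (ZoomCarrier Y X)) :=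
  ({ B | ∃ (i : IsolPts Y) (W : Set (X i)), IsOpen W ∧
      B = Sum.inr '' ((Sigma.mk i) '' W) } ∪
   { B | ∃ U : Set Y, IsOpen U ∧ B = zoomVSet Y X U })

lemma zoomTopology_eq (Y : Type u) [TopologicalSpace Y] (X : IsolPts Y → Type v)
    [∀ i, TopologicalSpace (X i)] :
    (zoomTopology Y X : TopologicalSpace (ZoomCarrier Y X)) =
      TopologicalSpace.generateFrom (zoomGens Y X) := rfl

/-- Projection of the zoom space onto `Y`. -/
def zproj (Y : Type u) [TopologicalSpace Y] (X : IsolPts Y → Type v) :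
    ZoomCarrier Y X → Y :=
  Sum.elim (fun y => y.1) fun p => p.1.1

lemma zoomVSet_eq (U : Set Y) : zoomVSet Y X U = zproj Y X ⁻¹' U := by
  ext z; cases z <;> rfl

/-- The copy of (an open subset of) `X i` inside the zoom space. -/
def copyGen (i : IsolPts Y) (W : Set (X i)) : Set (ZoomCarrier Y X) :=
  Sum.inr '' ((Sigma.mk i) '' W)

lemma isOpen_of_mem_zoomGens {s : Set (ZoomCarrier Y X)} (h : s ∈ zoomGens Y X) :
    IsOpen s :=
  TopologicalSpace.GenerateOpen.basic s h

lemma isOpen_zoomVSet {U : Set Y} (hU : IsOpen U) : IsOpen (zoomVSet Y X U) :=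
  isOpen_of_mem_zoomGens (Or.inr ⟨U, hU, rfl⟩)

lemma isOpen_copyGen {i : IsolPts Y} {W : Set (X i)} (hW : IsOpen W) :
    IsOpen (copyGen (X := X) i W) :=
  isOpen_of_mem_zoomGens (Or.inl ⟨i, W, hW, rfl⟩)

lemma inl_not_mem_copyGen {y : {y : Y // y ∉ IsolPts Y}} {i : IsolPts Y}
    {W : Set (X i)} : (Sum.inl y : ZoomCarrier Y X) ∉ copyGen i W := by
  rintro ⟨p, -, h⟩; cases h

lemma mem_copyGen {i' i : IsolPts Y} {W : Set (X i)} {x : X i'} :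
    (Sum.inr ⟨i', x⟩ : ZoomCarrier Y X) ∈ copyGen i W ↔ ∃ h : i' = i, h ▸ x ∈ W := by
  constructor
  · rintro ⟨p, ⟨w, hw, rfl⟩, heq⟩
    injection heq with h
    injection h with h1 h2
    subst h1
    rw [eq_of_heq h2] at hw
    exact ⟨rfl, hw⟩
  · rintro ⟨rfl, hx⟩
    exact ⟨⟨i', x⟩, ⟨x, hx, rfl⟩, rfl⟩

lemma mem_copyGen_self {i : IsolPts Y} {W : Set (X i)} {x : X i} :
    (Sum.inr ⟨i, x⟩ : ZoomCarrier Y X) ∈ copyGen i W ↔ x ∈ W := by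
  rw [mem_copyGen]
  exact ⟨fun ⟨h, hx⟩ => hx, fun hx => ⟨rfl, hx⟩⟩

lemma continuous_zproj : Continuous (zproj Y X) := by
  rw [continuous_def]
  intro U hU
  rw [← zoomVSet_eq]
  exact isOpen_zoomVSet hU

/-- Basis lemma at a non-isolated point. -/
lemma exists_vset_subset {O : Set (ZoomCarrier Y X)} (hO : IsOpen O)
    {y : Y} (hy : y ∉ IsolPts Y) (hz : (Sum.inl ⟨y, hy⟩ : ZoomCarrier Y X) ∈ O) :
    ∃ U : Set Y, IsOpen U ∧ y ∈ U ∧ zoomVSet Y X U ⊆ O := by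
  have hO' : TopologicalSpace.GenerateOpen (zoomGens Y X) O := hO
  clear hO
  induction hO' with
  | basic s hs =>
    rcases hs with ⟨i, W, hW, rfl⟩ | ⟨U, hU, rfl⟩
    · exact absurd hz inl_not_mem_copyGen
    · exact ⟨U, hU, hz, subset_rfl⟩
  | univ => exact ⟨Set.univ, isOpen_univ, trivial, fun _ _ => trivial⟩
  | inter s t hs ht ihs iht =>
    obtain ⟨U1, hU1, hy1, hs1⟩ := ihs hz.1
    obtain ⟨U2, hU2, hy2, hs2⟩ := iht hz.2
    refine ⟨U1 ∩ U2, hU1.inter hU2, ⟨hy1, hy2⟩, ?_⟩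
    rw [zoomVSet_eq]
    rw [zoomVSet_eq] at hs1 hs2
    exact fun w hw => ⟨hs1 hw.1, hs2 hw.2⟩
  | sUnion S hS ih =>
    obtain ⟨s, hsS, hzs⟩ := hz
    obtain ⟨U, hU, hyU, hsub⟩ := ih s hsS hzs
    exact ⟨U, hU, hyU, hsub.trans (Set.subset_sUnion_of_mem hsS)⟩

/-- Basis lemma at a point of a copy. -/
lemma exists_copy_subset {O : Set (ZoomCarrier Y X)} (hO : IsOpen O)
    {i : IsolPts Y} {x : X i} (hz : (Sum.inr ⟨i, x⟩ : ZoomCarrier Y X) ∈ O) :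
    ∃ W : Set (X i), IsOpen W ∧ x ∈ W ∧ copyGen i W ⊆ O := by
  have hO' : TopologicalSpace.GenerateOpen (zoomGens Y X) O := hO
  clear hO
  induction hO' with
  | basic s hs =>
    rcases hs with ⟨i', W, hW, rfl⟩ | ⟨U, hU, rfl⟩
    · obtain ⟨h, hx⟩ := mem_copyGen.mp hz
      subst h
      exact ⟨W, hW, hx, subset_rfl⟩
    · refine ⟨Set.univ, isOpen_univ, trivial, ?_⟩
      rintro z ⟨p, ⟨w, -, rfl⟩, rfl⟩
      exact hz
  | univ => exact ⟨Set.univ, isOpen_univ, trivial, fun _ _ => trivial⟩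
  | inter s t hs ht ihs iht =>
    obtain ⟨W1, hW1, hx1, hs1⟩ := ihs hz.1
    obtain ⟨W2, hW2, hx2, hs2⟩ := iht hz.2
    refine ⟨W1 ∩ W2, hW1.inter hW2, ⟨hx1, hx2⟩, fun z hzm => ?_⟩
    obtain ⟨p, ⟨w, hw, rfl⟩, rfl⟩ := hzm
    exact ⟨hs1 ⟨⟨i, w⟩, ⟨w, hw.1, rfl⟩, rfl⟩, hs2 ⟨⟨i, w⟩, ⟨w, hw.2, rfl⟩, rfl⟩⟩
  | sUnion S hS ih =>
    obtain ⟨s, hsS, hzs⟩ := hz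
    obtain ⟨W, hW, hxW, hsub⟩ := ih s hsS hzs
    exact ⟨W, hW, hxW, hsub.trans (Set.subset_sUnion_of_mem hsS)⟩

end ZoomHelpers
section ZoomHelpers2

set_option linter.unusedSectionVars false

variable {Y : Type u} [TopologicalSpace Y] {X : IsolPts Y → Type v}
  [∀ i, TopologicalSpace (X i)]

/-- The embedding of `X i` into the zoom space. -/
def copyEmb (i : IsolPts Y) : X i → ZoomCarrier Y X := fun x => Sum.inr ⟨i, x⟩

lemma copyEmb_image (i : IsolPts Y) (W : Set (X i)) :
    copyEmb (Y := Y) i '' W = copyGen i W := by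
  unfold copyEmb copyGen
  exact (Set.image_image _ _ _).symm

lemma range_copyEmb (i : IsolPts Y) :
    Set.range (copyEmb (Y := Y) (X := X) i) = copyGen i Set.univ := by
  rw [← Set.image_univ, copyEmb_image]

lemma continuous_copyEmb (i : IsolPts Y) : Continuous (copyEmb (Y := Y) (X := X) i) := by
  apply continuous_generateFrom_iff.mpr
  rintro s (⟨j, W, hW, rfl⟩ | ⟨U, hU, rfl⟩)
  · by_cases hij : i = j
    · subst hij
      have : copyEmb (Y := Y) i ⁻¹' (Sum.inr '' (Sigma.mk i '' W)) = W := by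
        ext x
        exact mem_copyGen_self (W := W)
      erw [this]; exact hW
    · have : copyEmb (Y := Y) i ⁻¹' (Sum.inr '' (Sigma.mk j '' W)) = ∅ := by
        ext x
        simp only [Set.mem_preimage, Set.mem_empty_iff_false, iff_false]
        intro hmem
        obtain ⟨h, -⟩ := mem_copyGen.mp hmem
        exact hij h
      erw [this]; exact isOpen_empty
  · by_cases hiU : (i : Y) ∈ U
    · have : copyEmb (Y := Y) (X := X) i ⁻¹' zoomVSet Y X U = Set.univ :=
        Set.eq_univ_of_forall fun x => hiU
      rw [this]; exact isOpen_univ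
    · have : copyEmb (Y := Y) (X := X) i ⁻¹' zoomVSet Y X U = ∅ :=
        Set.eq_empty_of_forall_notMem fun x h => hiU h
      erw [this]; exact isOpen_empty

lemma injective_copyEmb (i : IsolPts Y) :
    Function.Injective (copyEmb (Y := Y) (X := X) i) := by
  intro a b h
  have h2 : (⟨i, a⟩ : (j : IsolPts Y) × X j) = ⟨i, b⟩ := by injection h
  exact sigma_mk_injective h2

lemma isOpenMap_copyEmb (i : IsolPts Y) : IsOpenMap (copyEmb (Y := Y) (X := X) i) := by
  intro W hW
  rw [copyEmb_image]
  exact isOpen_copyGen hW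

lemma isOpenEmbedding_copyEmb (i : IsolPts Y) :
    IsOpenEmbedding (copyEmb (Y := Y) (X := X) i) :=
  IsOpenEmbedding.of_continuous_injective_isOpenMap (continuous_copyEmb i)
    (injective_copyEmb i) (isOpenMap_copyEmb i)

lemma compl_range_copyEmb [T1Space Y] (i : IsolPts Y) :
    (Set.range (copyEmb (Y := Y) (X := X) i))ᶜ = zoomVSet Y X {(i : Y)}ᶜ := by
  rw [range_copyEmb]
  ext z
  cases z with
  | inl y =>
    erw [Set.mem_compl_iff]
    constructor
    · intro _
      show (y : Y) ∈ ({(i : Y)} : Set Y)ᶜ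
      intro hmem
      exact y.2 (by rw [Set.mem_singleton_iff.mp hmem]; exact i.2)
    · intro _ h
      exact inl_not_mem_copyGen h
  | inr p =>
    obtain ⟨j, x⟩ := p
    erw [Set.mem_compl_iff]
    constructor
    · intro h
      show (j : Y) ∈ ({(i : Y)} : Set Y)ᶜ
      intro hmem
      exact h (mem_copyGen.mpr ⟨Subtype.ext (Set.mem_singleton_iff.mp hmem), trivial⟩)
    · intro h hmem
      obtain ⟨hji, -⟩ := mem_copyGen.mp hmem
      subst hji
      exact h rfl

lemma isClosed_range_copyEmb [T1Space Y] (i : IsolPts Y) :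
    IsClosed (Set.range (copyEmb (Y := Y) (X := X) i)) := by
  rw [← isOpen_compl_iff, compl_range_copyEmb]
  exact isOpen_zoomVSet isClosed_singleton.isOpen_compl

lemma zproj_surjective [∀ i, Nonempty (X i)] : Function.Surjective (zproj Y X) := by
  intro y
  by_cases h : y ∈ IsolPts Y
  · exact ⟨Sum.inr ⟨⟨y, h⟩, Classical.arbitrary _⟩, rfl⟩
  · exact ⟨Sum.inl ⟨y, h⟩, rfl⟩

lemma isQuotientMap_zproj [∀ i, Nonempty (X i)] : IsQuotientMap (zproj Y X) := by
  rw [isQuotientMap_iff, isCoinducing_iff]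
  refine ⟨fun s => ⟨fun hs => ?_, fun hs => hs.preimage continuous_zproj⟩, zproj_surjective⟩
  rw [isOpen_iff_forall_mem_open]
  intro y hy
  by_cases hiso : y ∈ IsolPts Y
  · exact ⟨{y}, Set.singleton_subset_iff.mpr hy, hiso, rfl⟩
  · have hz : (Sum.inl ⟨y, hiso⟩ : ZoomCarrier Y X) ∈ zproj Y X ⁻¹' s := hy
    obtain ⟨U, hU, hyU, hsub⟩ := exists_vset_subset hs hiso hz
    refine ⟨U, fun u hu => ?_, hU, hyU⟩
    obtain ⟨w, rfl⟩ := zproj_surjective (X := X) u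
    exact hsub (by rw [zoomVSet_eq]; exact hu)

/-- The closed copy of `Y` in the zoom space given by a selector. -/
def selEmb (s : ∀ i : IsolPts Y, X i) : Y → ZoomCarrier Y X := fun y =>
  if h : y ∈ IsolPts Y then Sum.inr ⟨⟨y, h⟩, s ⟨y, h⟩⟩ else Sum.inl ⟨y, h⟩

lemma zproj_selEmb (s : ∀ i : IsolPts Y, X i) (y : Y) : zproj Y X (selEmb s y) = y := by
  by_cases h : y ∈ IsolPts Y
  · exact (congrArg (zproj Y X) (dif_pos h : selEmb s y = _)).trans rfl
  · exact (congrArg (zproj Y X) (dif_neg h : selEmb s y = _)).trans rfl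

lemma selEmb_isolated (s : ∀ i : IsolPts Y, X i) (i : IsolPts Y) :
    selEmb (Y := Y) s (i : Y) = Sum.inr ⟨i, s i⟩ := by
  unfold selEmb
  exact dif_pos i.2

lemma continuous_selEmb (s : ∀ i : IsolPts Y, X i) : Continuous (selEmb (Y := Y) s) := by
  apply continuous_generateFrom_iff.mpr
  rintro t (⟨j, W, hW, rfl⟩ | ⟨U, hU, rfl⟩)
  · rw [isOpen_iff_forall_mem_open]
    intro y hy
    have hyiso : y ∈ IsolPts Y := by
      by_contra hn
      have : selEmb s y = Sum.inl ⟨y, hn⟩ := dif_neg hn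
      have hy2 : selEmb s y ∈ copyGen j W := hy
      erw [this] at hy2
      exact inl_not_mem_copyGen hy2
    exact ⟨{y}, Set.singleton_subset_iff.mpr hy, hyiso, rfl⟩
  · have : selEmb (Y := Y) s ⁻¹' zoomVSet Y X U = U := by
      rw [zoomVSet_eq, ← Set.preimage_comp]
      have : zproj Y X ∘ selEmb s = id := funext (zproj_selEmb s)
      rw [this, Set.preimage_id]
    rw [this]; exact hU

lemma isEmbedding_selEmb (s : ∀ i : IsolPts Y, X i) : IsEmbedding (selEmb (Y := Y) s) :=
  Function.LeftInverse.isEmbedding (g := selEmb s) (zproj_selEmb s)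
    continuous_zproj (continuous_selEmb s)

lemma mem_range_selEmb_inr {s : ∀ i : IsolPts Y, X i} {i : IsolPts Y} {x : X i} :
    (Sum.inr ⟨i, x⟩ : ZoomCarrier Y X) ∈ Set.range (selEmb s) ↔ x = s i := by
  constructor
  · rintro ⟨y, hy⟩
    by_cases hyi : y ∈ IsolPts Y
    · replace hy := (dif_pos hyi : selEmb s y = _).symm.trans hy
      injection hy with h'
      injection h' with h1 h2
      subst h1
      exact (eq_of_heq h2).symm
    · replace hy := (dif_neg hyi : selEmb s y = _).symm.trans hy
      exact (Sum.inl_ne_inr hy).elim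
  · rintro rfl
    exact ⟨(i : Y), selEmb_isolated s i⟩

lemma range_selEmb_compl (s : ∀ i : IsolPts Y, X i) :
    (Set.range (selEmb (Y := Y) s))ᶜ = ⋃ i : IsolPts Y, copyGen i {s i}ᶜ := by
  ext z
  cases z with
  | inl y =>
    erw [Set.mem_compl_iff, Set.mem_iUnion]
    constructor
    · intro h
      exact absurd ⟨(y : Y), dif_neg y.2⟩ h
    · rintro ⟨i, hi⟩ _
      exact inl_not_mem_copyGen hi
  | inr p =>
    obtain ⟨i, x⟩ := p
    erw [Set.mem_compl_iff, Set.mem_iUnion]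
    constructor
    · intro h
      exact ⟨i, mem_copyGen_self.mpr fun hx => h (mem_range_selEmb_inr.mpr hx)⟩
    · rintro ⟨j, hj⟩ hmem
      have hx := mem_range_selEmb_inr.mp hmem
      subst hx
      obtain ⟨h, hx⟩ := mem_copyGen.mp hj
      subst h
      exact hx rfl

lemma isClosed_range_selEmb [∀ i, T1Space (X i)] (s : ∀ i : IsolPts Y, X i) :
    IsClosed (Set.range (selEmb (Y := Y) s)) := by
  rw [← isOpen_compl_iff, range_selEmb_compl]
  exact isOpen_iUnion fun i => isOpen_copyGen isClosed_singleton.isOpen_compl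

lemma range_selEmb_eq (s : ∀ i : IsolPts Y, X i) :
    Set.range (selEmb (Y := Y) s) =
      Set.range (Sum.inl : { y : Y // y ∉ IsolPts Y } → ZoomCarrier Y X) ∪
      Set.range (fun i : IsolPts Y => (Sum.inr ⟨i, s i⟩ : ZoomCarrier Y X)) := by
  ext z
  cases z with
  | inl y =>
    erw [Set.mem_union, Set.mem_range, Set.mem_range]
    constructor
    · intro _; exact Or.inl ⟨y, rfl⟩
    · intro _; exact ⟨(y : Y), dif_neg y.2⟩
  | inr p =>
    obtain ⟨i, x⟩ := p
    constructor
    · intro hmem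
      have hx := mem_range_selEmb_inr.mp hmem
      subst hx
      exact Or.inr ⟨i, rfl⟩
    · rintro (⟨y, hy⟩ | ⟨j, hj⟩)
      · exact (Sum.inl_ne_inr hy).elim
      · apply mem_range_selEmb_inr.mpr
        injection hj with h'
        injection h' with h1 h2
        subst h1
        exact (eq_of_heq h2).symm

end ZoomHelpers2
section ZoomHelpers3

set_option linter.unusedSectionVars false

open unitInterval in
/-- Extension of a function on `X i` to the zoom space by the constant `1`. -/
noncomputable def extCopy {Y : Type u} [TopologicalSpace Y] {X : IsolPts Y → Type v}
    [∀ i, TopologicalSpace (X i)] (i : IsolPts Y) (f : X i → I) :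
    ZoomCarrier Y X → I := fun z =>
  if h : ∃ x : X i, z = Sum.inr ⟨i, x⟩ then f h.choose else 1

variable {Y : Type u} [TopologicalSpace Y] {X : IsolPts Y → Type v}
  [∀ i, TopologicalSpace (X i)]

open unitInterval

lemma extCopy_apply (i : IsolPts Y) (f : X i → I) (x : X i) :
    extCopy (Y := Y) i f (Sum.inr ⟨i, x⟩) = f x := by
  have hex : ∃ x' : X i, (Sum.inr ⟨i, x⟩ : ZoomCarrier Y X) = Sum.inr ⟨i, x'⟩ := ⟨x, rfl⟩
  refine (dif_pos hex).trans ?_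
  congr 1
  have h2 : (⟨i, x⟩ : (j : IsolPts Y) × X j) = ⟨i, hex.choose⟩ := by
    injection hex.choose_spec
  exact (sigma_mk_injective h2).symm

lemma extCopy_apply_notMem (i : IsolPts Y) (f : X i → I) {z : ZoomCarrier Y X}
    (hz : z ∉ Set.range (copyEmb i)) : extCopy (Y := Y) i f z = 1 := by
  refine dif_neg ?_
  rintro ⟨x, rfl⟩
  exact hz ⟨x, rfl⟩

lemma continuous_extCopy [T1Space Y] (i : IsolPts Y) {f : X i → I}
    (hf : Continuous f) : Continuous (extCopy (Y := Y) i f) := by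
  rw [continuous_iff_continuousAt]
  intro z
  by_cases hz : z ∈ Set.range (copyEmb (Y := Y) (X := X) i)
  · obtain ⟨x, rfl⟩ := hz
    have hmap := (isOpenEmbedding_copyEmb (Y := Y) (X := X) i).map_nhds_eq x
    have happ : extCopy (Y := Y) i f (copyEmb i x) = f x := extCopy_apply i f x
    have hcomp : (extCopy (Y := Y) i f ∘ copyEmb i) = f :=
      funext fun x' => extCopy_apply i f x'
    unfold ContinuousAt
    rw [happ, ← hmap, Filter.tendsto_map'_iff, hcomp]
    exact hf.tendsto x
  · have hev : extCopy (Y := Y) i f =ᶠ[nhds z] fun _ => 1 := by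
      apply Filter.eventually_of_mem
        (((isClosed_range_copyEmb i).isOpen_compl).mem_nhds hz)
      intro w hw
      exact extCopy_apply_notMem i f hw
    exact (continuousAt_const (y := (1 : I))).congr hev.symm

lemma t1Space_zoom [T1Space Y] [∀ i, T1Space (X i)] : T1Space (ZoomCarrier Y X) := by
  constructor
  intro z
  rw [← isOpen_compl_iff]
  cases z with
  | inl y =>
    have : ({(Sum.inl y : ZoomCarrier Y X)} : Set (ZoomCarrier Y X))ᶜ =
        zoomVSet Y X {(y : Y)}ᶜ ∪ ⋃ i : IsolPts Y, copyGen i Set.univ := by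
      ext w
      cases w with
      | inl y' =>
        erw [Set.mem_compl_iff, Set.mem_singleton_iff, Set.mem_union, Set.mem_iUnion]
        constructor
        · intro h
          refine Or.inl ?_
          show (y' : Y) ∈ ({(y : Y)} : Set Y)ᶜ
          intro hm
          exact h (congrArg Sum.inl (Subtype.ext hm))
        · rintro (h | ⟨i, hi⟩) heq
          · injection heq with h'
            exact h (by rw [h']; exact rfl)
          · exact inl_not_mem_copyGen hi
      | inr p =>
        erw [Set.mem_compl_iff, Set.mem_singleton_iff, Set.mem_union, Set.mem_iUnion]
        constructor
        · intro _
          exact Or.inr ⟨p.1, ⟨p, ⟨p.2, trivial, Sigma.eta p⟩, rfl⟩⟩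
        · intro _ heq
          exact (Sum.inr_ne_inl heq).elim
    erw [this]
    exact (isOpen_zoomVSet isClosed_singleton.isOpen_compl).union
      (isOpen_iUnion fun i => isOpen_copyGen isOpen_univ)
  | inr p =>
    obtain ⟨i, x⟩ := p
    have : ({(Sum.inr ⟨i, x⟩ : ZoomCarrier Y X)} : Set (ZoomCarrier Y X))ᶜ =
        zoomVSet Y X {(i : Y)}ᶜ ∪ copyGen i {x}ᶜ := by
      ext w
      cases w with
      | inl y' =>
        erw [Set.mem_compl_iff, Set.mem_singleton_iff, Set.mem_union]
        constructor
        · intro _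
          refine Or.inl ?_
          show (y' : Y) ∈ ({(i : Y)} : Set Y)ᶜ
          intro hm
          exact y'.2 (by rw [hm]; exact i.2)
        · intro _ heq
          exact (Sum.inl_ne_inr heq).elim
      | inr q =>
        obtain ⟨j, x'⟩ := q
        erw [Set.mem_compl_iff, Set.mem_singleton_iff, Set.mem_union]
        by_cases hji : j = i
        · subst hji
          constructor
          · intro h
            refine Or.inr (mem_copyGen_self.mpr ?_)
            intro hm
            exact h (by rw [Set.mem_singleton_iff.mp hm])
          · rintro (h | h) heq
            · exact h rfl
            · have hx := mem_copyGen_self.mp h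
              have h2 : (⟨j, x'⟩ : (k : IsolPts Y) × X k) = ⟨j, x⟩ := by injection heq
              exact hx (sigma_mk_injective h2)
        · constructor
          · intro _
            refine Or.inl ?_
            show (j : Y) ∈ ({(i : Y)} : Set Y)ᶜ
            intro hm
            exact hji (Subtype.ext hm)
          · intro _ heq
            have h2 : (⟨j, x'⟩ : (k : IsolPts Y) × X k) = ⟨i, x⟩ := by injection heq
            injection h2 with h3 h4
            exact hji h3
    erw [this]
    exact (isOpen_zoomVSet isClosed_singleton.isOpen_compl).union
      (isOpen_copyGen isClosed_singleton.isOpen_compl)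

lemma completelyRegular_zoom [T1Space Y] [CompletelyRegularSpace Y]
    [∀ i, CompletelyRegularSpace (X i)] :
    CompletelyRegularSpace (ZoomCarrier Y X) := by
  constructor
  intro z K hK hzK
  cases z with
  | inl y =>
    obtain ⟨U, hU, hyU, hsub⟩ := exists_vset_subset hK.isOpen_compl y.2
      (by rw [Subtype.eta]; exact hzK)
    obtain ⟨f, hf, hf0, hf1⟩ := CompletelyRegularSpace.completely_regular (y : Y) Uᶜ
      (isClosed_compl_iff.mpr hU) (fun h => h hyU)
    refine ⟨f ∘ zproj Y X, hf.comp continuous_zproj, ?_, ?_⟩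
    · show f ((y : Y)) = 0
      exact hf0
    · intro w hw
      have hwU : zproj Y X w ∉ U := by
        intro hm
        exact (hsub (by rw [zoomVSet_eq]; exact hm)) hw
      exact hf1 hwU
  | inr p =>
    obtain ⟨i, x⟩ := p
    obtain ⟨W, hW, hxW, hsub⟩ := exists_copy_subset hK.isOpen_compl hzK
    obtain ⟨f, hf, hf0, hf1⟩ := CompletelyRegularSpace.completely_regular x Wᶜ
      (isClosed_compl_iff.mpr hW) (fun h => h hxW)
    refine ⟨extCopy i f, continuous_extCopy i hf, ?_, ?_⟩
    · show extCopy i f (Sum.inr ⟨i, x⟩) = 0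
      rw [extCopy_apply]
      exact hf0
    · intro w hw
      by_cases hw' : w ∈ Set.range (copyEmb (Y := Y) (X := X) i)
      · obtain ⟨x', rfl⟩ := hw'
        show extCopy i f (Sum.inr ⟨i, x'⟩) = 1
        rw [extCopy_apply]
        refine hf1 ?_
        intro hm
        exact hsub (mem_copyGen_self.mpr hm) hw
      · show extCopy i f w = 1
        exact extCopy_apply_notMem i f hw'

lemma t35Space_zoom [T35Space Y] [∀ i, T35Space (X i)] : T35Space (ZoomCarrier Y X) :=
  { toT0Space := (t1Space_zoom (Y := Y) (X := X)).t0Space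
    toCompletelyRegularSpace := completelyRegular_zoom }

lemma t2Space_zoom [T2Space Y] [∀ i, T2Space (X i)] : T2Space (ZoomCarrier Y X) := by
  constructor
  intro a b hab
  have sep_mixed : ∀ (y : {y : Y // y ∉ IsolPts Y}) (i : IsolPts Y) (x : X i),
      ∃ u v : Set (ZoomCarrier Y X), IsOpen u ∧ IsOpen v ∧ (Sum.inl y : ZoomCarrier Y X) ∈ u ∧
        (Sum.inr ⟨i, x⟩ : ZoomCarrier Y X) ∈ v ∧ Disjoint u v := by
    intro y i x
    refine ⟨zoomVSet Y X {(i : Y)}ᶜ, copyGen i Set.univ,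
      isOpen_zoomVSet isClosed_singleton.isOpen_compl, isOpen_copyGen isOpen_univ,
      ?_, ⟨⟨i, x⟩, ⟨x, trivial, rfl⟩, rfl⟩, ?_⟩
    · show (y : Y) ∈ ({(i : Y)} : Set Y)ᶜ
      intro hm
      exact y.2 (by rw [hm]; exact i.2)
    · rw [Set.disjoint_left]
      rintro z hz ⟨q, ⟨w, -, rfl⟩, rfl⟩
      exact hz rfl
  cases a with
  | inl y =>
    cases b with
    | inl y' =>
      have hyy : (y : Y) ≠ (y' : Y) := by
        intro h
        exact hab (congrArg Sum.inl (Subtype.ext h))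
      obtain ⟨U, V, hU, hV, hyU, hyV, hdisj⟩ := t2_separation hyy
      refine ⟨zoomVSet Y X U, zoomVSet Y X V, isOpen_zoomVSet hU, isOpen_zoomVSet hV,
        hyU, hyV, ?_⟩
      rw [zoomVSet_eq, zoomVSet_eq]
      exact hdisj.preimage _
    | inr p =>
      obtain ⟨i, x⟩ := p
      exact sep_mixed y i x
  | inr p =>
    obtain ⟨i, x⟩ := p
    cases b with
    | inl y =>
      obtain ⟨u, v, hu, hv, hyu, hxv, hdisj⟩ := sep_mixed y i x
      exact ⟨v, u, hv, hu, hxv, hyu, hdisj.symm⟩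
    | inr q =>
      obtain ⟨j, x'⟩ := q
      by_cases hij : i = j
      · subst hij
        have hxx : x ≠ x' := by
          intro h
          exact hab (by rw [h])
        obtain ⟨W1, W2, hW1, hW2, hxW1, hxW2, hdisj⟩ := t2_separation hxx
        refine ⟨copyGen i W1, copyGen i W2, isOpen_copyGen hW1, isOpen_copyGen hW2,
          mem_copyGen_self.mpr hxW1, mem_copyGen_self.mpr hxW2, ?_⟩
        rw [Set.disjoint_left]
        rintro z hz1 hz2
        obtain ⟨q, ⟨w, hw, rfl⟩, rfl⟩ := hz1
        have hw2 := mem_copyGen_self.mp hz2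
        exact Set.disjoint_left.mp hdisj hw hw2
      · refine ⟨copyGen i Set.univ, copyGen j Set.univ, isOpen_copyGen isOpen_univ,
          isOpen_copyGen isOpen_univ, ⟨⟨i, x⟩, ⟨x, trivial, rfl⟩, rfl⟩,
          ⟨⟨j, x'⟩, ⟨x', trivial, rfl⟩, rfl⟩, ?_⟩
        rw [Set.disjoint_left]
        rintro z ⟨q, ⟨w, -, rfl⟩, rfl⟩ hz2
        obtain ⟨h, -⟩ := mem_copyGen.mp hz2
        exact hij h

end ZoomHelpers3
section ZoomHelpers4

set_option linter.unusedSectionVars false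

variable {Y : Type u} [TopologicalSpace Y] {X : IsolPts Y → Type v}
  [∀ i, TopologicalSpace (X i)]

lemma clusterPt_inl_of_clusterPt {f : Filter (ZoomCarrier Y X)} {y : Y}
    (hy : y ∉ IsolPts Y) (h : ClusterPt y (Filter.map (zproj Y X) f)) :
    @ClusterPt (ZoomCarrier Y X) (zoomTopology Y X) (Sum.inl ⟨y, hy⟩) f := by
  erw [clusterPt_iff_nonempty] at h ⊢
  intro U hU V hV
  obtain ⟨O, hOU, hO, hzO⟩ := mem_nhds_iff.mp hU
  obtain ⟨W, hW, hyW, hWO⟩ := exists_vset_subset hO hy hzO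
  obtain ⟨y', hy'W, hy'V⟩ := h (hW.mem_nhds hyW) (Filter.image_mem_map hV)
  obtain ⟨w, hwV, hwproj⟩ := hy'V
  refine ⟨w, hOU (hWO ?_), hwV⟩
  rw [zoomVSet_eq]
  show zproj Y X w ∈ W
  rw [hwproj]
  exact hy'W

lemma mem_range_copyEmb_of_zproj {w : ZoomCarrier Y X} {i : IsolPts Y}
    (h : zproj Y X w = (i : Y)) : w ∈ Set.range (copyEmb i) := by
  cases w with
  | inl y =>
    refine absurd ?_ y.2
    rw [show (y : Y) = (i : Y) from h]
    exact i.2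
  | inr p =>
    obtain ⟨j, x⟩ := p
    have : j = i := Subtype.ext h
    subst this
    exact ⟨x, rfl⟩

lemma copy_inter_nonempty {f : Filter (ZoomCarrier Y X)} {i : IsolPts Y}
    (h : ClusterPt (i : Y) (Filter.map (zproj Y X) f)) :
    ∀ V ∈ f, (V ∩ Set.range (copyEmb i)).Nonempty := by
  intro V hV
  rw [clusterPt_iff_nonempty] at h
  have hsing : ({(i : Y)} : Set Y) ∈ nhds (i : Y) := i.2.mem_nhds rfl
  obtain ⟨y', hy'1, hy'2⟩ := h hsing (Filter.image_mem_map hV)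
  obtain ⟨w, hwV, hwproj⟩ := hy'2
  refine ⟨w, hwV, mem_range_copyEmb_of_zproj ?_⟩
  rw [hwproj]
  exact Set.mem_singleton_iff.mp hy'1

lemma compactSpace_zoom [CompactSpace Y] [∀ i, CompactSpace (X i)] :
    CompactSpace (ZoomCarrier Y X) := by
  constructor
  intro f hf hle
  obtain ⟨y, -, hy⟩ := isCompact_univ (f := Filter.map (zproj Y X) f)
    (Filter.le_principal_iff.mpr Filter.univ_mem)
  by_cases hiso : y ∈ IsolPts Y
  · have hne : Filter.NeBot (f ⊓ Filter.principal (Set.range (copyEmb (⟨y, hiso⟩ : IsolPts Y)))) :=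
      Filter.inf_principal_neBot_iff.mpr (copy_inter_nonempty hy)
    have hcpt : IsCompact (Set.range (copyEmb (Y := Y) (X := X) ⟨y, hiso⟩)) :=
      isCompact_range (continuous_copyEmb _)
    obtain ⟨x, -, hcl⟩ := hcpt (f := f ⊓ Filter.principal _) inf_le_right
    exact ⟨x, trivial, hcl.mono inf_le_left⟩
  · exact ⟨Sum.inl ⟨y, hiso⟩, trivial, clusterPt_inl_of_clusterPt hiso hy⟩

lemma lindelofSpace_zoom [LindelofSpace Y] [∀ i, LindelofSpace (X i)] :
    LindelofSpace (ZoomCarrier Y X) := by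
  constructor
  intro f hf hcount hle
  obtain ⟨y, -, hy⟩ := isLindelof_univ (f := Filter.map (zproj Y X) f)
    (Filter.le_principal_iff.mpr Filter.univ_mem)
  by_cases hiso : y ∈ IsolPts Y
  · have hne : Filter.NeBot (f ⊓ Filter.principal (Set.range (copyEmb (⟨y, hiso⟩ : IsolPts Y)))) :=
      Filter.inf_principal_neBot_iff.mpr (copy_inter_nonempty hy)
    have hcpt : IsLindelof (Set.range (copyEmb (Y := Y) (X := X) ⟨y, hiso⟩)) :=
      isLindelof_range (continuous_copyEmb _)
    obtain ⟨x, -, hcl⟩ := hcpt (f := f ⊓ Filter.principal _) inf_le_right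
    exact ⟨x, trivial, hcl.mono inf_le_left⟩
  · exact ⟨Sum.inl ⟨y, hiso⟩, trivial, clusterPt_inl_of_clusterPt hiso hy⟩

end ZoomHelpers4
section ZoomHelpers5

set_option linter.unusedSectionVars false

variable {Yb : Type u} [TopologicalSpace Yb] {Ys : Set Yb}

lemma isolated_mem_of_dense (hd : Dense Ys) (i : IsolPts Yb) : (i : Yb) ∈ Ys := by
  obtain ⟨x, hx1, hx2⟩ := hd.inter_open_nonempty {(i : Yb)} i.2 ⟨(i : Yb), rfl⟩
  rwa [Set.mem_singleton_iff.mp hx1] at hx2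

lemma isol_sub_iff [T1Space Yb] (hd : Dense Ys) (y : ↥Ys) :
    y ∈ IsolPts ↥Ys ↔ (y : Yb) ∈ IsolPts Yb := by
  constructor
  · intro h
    obtain ⟨U, hU, hUy⟩ := isOpen_induced_iff.mp h
    have h1 : U ∩ Ys = {(y : Yb)} := by
      ext u
      constructor
      · rintro ⟨hu1, hu2⟩
        have : (⟨u, hu2⟩ : ↥Ys) ∈ Subtype.val ⁻¹' U := hu1
        rw [hUy] at this
        exact congrArg Subtype.val (Set.mem_singleton_iff.mp this)
      · rintro rfl
        refine ⟨?_, y.2⟩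
        have : y ∈ Subtype.val ⁻¹' U := by rw [hUy]; rfl
        exact this
    have h2 : U ⊆ {(y : Yb)} := by
      have := hd.open_subset_closure_inter hU
      rw [h1, closure_singleton] at this
      exact this
    have h3 : U = {(y : Yb)} := by
      refine Set.Subset.antisymm h2 ?_
      rintro u rfl
      have : y ∈ Subtype.val ⁻¹' U := by rw [hUy]; rfl
      exact this
    show IsOpen {(y : Yb)}
    rw [← h3]
    exact hU
  · intro h
    have : ({y} : Set ↥Ys) = Subtype.val ⁻¹' {(y : Yb)} := by
      ext a
      simp [Subtype.ext_iff]
    show IsOpen ({y} : Set ↥Ys)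
    rw [this]
    exact h.preimage continuous_subtype_val

/-- The identification of isolated points of a dense subspace with those of the whole
space. -/
noncomputable def isoEquiv [T1Space Yb] (hd : Dense Ys) : IsolPts ↥Ys ≃ IsolPts Yb where
  toFun j := ⟨((j : ↥Ys) : Yb), (isol_sub_iff hd (j : ↥Ys)).mp j.2⟩
  invFun i := ⟨⟨(i : Yb), isolated_mem_of_dense hd i⟩,
    (isol_sub_iff hd _).mpr i.2⟩
  left_inv j := Subtype.ext (Subtype.ext rfl)
  right_inv i := Subtype.ext rfl

lemma isoEquiv_coe [T1Space Yb] (hd : Dense Ys) (j : IsolPts ↥Ys) :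
    ((isoEquiv hd j : IsolPts Yb) : Yb) = ((j : ↥Ys) : Yb) := rfl

variable {Xb : IsolPts Yb → Type v} [∀ i, TopologicalSpace (Xb i)]
variable [T1Space Yb] (hd : Dense Ys) (A : ∀ i : IsolPts Yb, Set (Xb i))

/-- The inclusion of the zoom space of subspaces into the zoom space. -/
def zoomIncl : ZoomCarrier ↥Ys (fun j => ↥(A (isoEquiv hd j))) →
    ZoomCarrier Yb Xb :=
  Sum.elim
    (fun y => Sum.inl ⟨((y : ↥Ys) : Yb),
      fun hi => y.2 ((isol_sub_iff hd (y : ↥Ys)).mpr hi)⟩)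
    (fun p => Sum.inr ⟨isoEquiv hd p.1, (p.2 : Xb _)⟩)

lemma zoomIncl_injective : Function.Injective (zoomIncl (Xb := Xb) hd A) := by
  rintro (y₁ | ⟨j₁, a₁⟩) (y₂ | ⟨j₂, a₂⟩) h
  · have h' : (Sum.inl _ : ZoomCarrier Yb Xb) = Sum.inl _ := h
    injection h' with h''
    exact congrArg Sum.inl (Subtype.ext (Subtype.ext (congrArg (Subtype.val : {y : Yb // y ∉ IsolPts Yb} → Yb) h'')))
  · exact (Sum.inl_ne_inr h).elim
  · exact (Sum.inr_ne_inl h).elim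
  · have h' : (Sum.inr _ : ZoomCarrier Yb Xb) = Sum.inr _ := h
    injection h' with h''
    injection h'' with h1 h2
    have hj : j₁ = j₂ := (isoEquiv hd).injective h1
    subst hj
    have ha : a₁ = a₂ := Subtype.ext (eq_of_heq h2)
    rw [ha]

lemma zoomIncl_preimage_vset (U : Set Yb) :
    zoomIncl (Xb := Xb) hd A ⁻¹' zoomVSet Yb Xb U =
      zoomVSet ↥Ys (fun j => ↥(A (isoEquiv hd j))) (Subtype.val ⁻¹' U) := by
  ext z
  cases z with
  | inl y => rfl
  | inr p => rfl

lemma zoomIncl_preimage_copyGen (j : IsolPts ↥Ys) (W : Set (Xb (isoEquiv hd j))) :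
    zoomIncl (Xb := Xb) hd A ⁻¹' copyGen (isoEquiv hd j) W =
      copyGen j ((Subtype.val : ↥(A (isoEquiv hd j)) → _) ⁻¹' W) := by
  ext z
  cases z with
  | inl y =>
    constructor
    · intro h
      exact absurd h inl_not_mem_copyGen
    · intro h
      exact absurd h inl_not_mem_copyGen
  | inr p =>
    obtain ⟨j', a⟩ := p
    constructor
    · intro h
      have h' : (Sum.inr ⟨isoEquiv hd j', (a : Xb _)⟩ : ZoomCarrier Yb Xb) ∈
          copyGen (isoEquiv hd j) W := h
      obtain ⟨heq, hmem⟩ := mem_copyGen.mp h'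
      have hj : j' = j := (isoEquiv hd).injective heq
      subst hj
      exact mem_copyGen_self.mpr hmem
    · intro h
      obtain ⟨heq, hmem⟩ := mem_copyGen.mp h
      subst heq
      show (Sum.inr ⟨isoEquiv hd j', (a : Xb _)⟩ : ZoomCarrier Yb Xb) ∈
        copyGen (isoEquiv hd j') W
      exact mem_copyGen_self.mpr hmem

lemma copyGen_congr {i i' : IsolPts Yb} (h : i = i') (W : Set (Xb i)) :
    copyGen (X := Xb) i W = copyGen i' ((fun x => h ▸ x) '' W) := by
  subst h
  show copyGen (X := Xb) i W = copyGen i ((fun x => x) '' W)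
  rw [Set.image_id']

lemma isOpen_cast_image {i i' : IsolPts Yb} (h : i = i') {W : Set (Xb i)}
    (hW : IsOpen W) : IsOpen ((fun x => h ▸ x) '' W) := by
  subst h
  show IsOpen ((fun x => x) '' W)
  rwa [Set.image_id']

lemma zoomIncl_isInducing : IsInducing (zoomIncl (Xb := Xb) hd A) := by
  constructor
  have hind : TopologicalSpace.induced (zoomIncl (Xb := Xb) hd A) (zoomTopology Yb Xb) =
      TopologicalSpace.generateFrom
        ((zoomIncl (Xb := Xb) hd A ⁻¹' ·) '' zoomGens Yb Xb) := by
    rw [zoomTopology_eq Yb Xb]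
    exact induced_generateFrom_eq
  rw [hind, zoomTopology_eq]
  apply le_antisymm
  · -- generateFrom small gens ≤ generateFrom preimages:
    -- every preimage of a big generator is open in the small zoom topology
    apply le_generateFrom
    rintro s ⟨t, (⟨i, W, hW, rfl⟩ | ⟨U, hU, rfl⟩), rfl⟩
    · -- t = copyGen i W; rewrite i as isoEquiv j
      show IsOpen[TopologicalSpace.generateFrom
        (zoomGens ↥Ys (fun j => ↥(A (isoEquiv hd j))))] _
      set j := (isoEquiv hd).symm i with hj
      have hi : i = isoEquiv hd j :=
        ((isoEquiv hd).apply_symm_apply i).symm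
      have : (Sum.inr '' (Sigma.mk i '' W) : Set (ZoomCarrier Yb Xb)) =
          copyGen (isoEquiv hd j) ((fun x => hi ▸ x) '' W) :=
        copyGen_congr hi W
      beta_reduce
      erw [this, zoomIncl_preimage_copyGen]
      exact TopologicalSpace.isOpen_generateFrom_of_mem
        (Or.inl ⟨j, _, (isOpen_cast_image hi hW).preimage continuous_subtype_val, rfl⟩)
    · beta_reduce
      rw [zoomIncl_preimage_vset]
      exact TopologicalSpace.isOpen_generateFrom_of_mem
        (Or.inr ⟨Subtype.val ⁻¹' U, hU.preimage continuous_subtype_val, rfl⟩)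
  · -- generateFrom preimages ≤ generateFrom small gens:
    -- every small generator is a preimage of a big generator
    apply le_generateFrom
    rintro s (⟨j, W', hW', rfl⟩ | ⟨U', hU', rfl⟩)
    · obtain ⟨W, hW, hWeq⟩ := isOpen_induced_iff.mp hW'
      apply TopologicalSpace.isOpen_generateFrom_of_mem
      refine ⟨copyGen (isoEquiv hd j) W, Or.inl ⟨_, W, hW, rfl⟩, ?_⟩
      beta_reduce
      rw [zoomIncl_preimage_copyGen, hWeq]
      rfl
    · obtain ⟨U, hU, hUeq⟩ := isOpen_induced_iff.mp hU'
      apply TopologicalSpace.isOpen_generateFrom_of_mem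
      refine ⟨zoomVSet Yb Xb U, Or.inr ⟨U, hU, rfl⟩, ?_⟩
      beta_reduce
      rw [zoomIncl_preimage_vset, hUeq]

lemma zoomIncl_isEmbedding : IsEmbedding (zoomIncl (Xb := Xb) hd A) :=
  ⟨zoomIncl_isInducing hd A, zoomIncl_injective hd A⟩

lemma zoomIncl_denseRange (hAne : ∀ i, (A i).Nonempty) (hAd : ∀ i, Dense (A i)) :
    DenseRange (zoomIncl (Xb := Xb) hd A) := by
  rw [DenseRange, dense_iff_inter_open]
  rintro O hO ⟨z, hz⟩
  cases z with
  | inl y =>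
    obtain ⟨y', hy'⟩ := y
    obtain ⟨U, hU, hyU, hsub⟩ := exists_vset_subset hO hy' hz
    obtain ⟨u, huU, huYs⟩ := hd.inter_open_nonempty U hU ⟨y', hyU⟩
    by_cases hiso : u ∈ IsolPts Yb
    · set i : IsolPts Yb := ⟨u, hiso⟩
      set j := (isoEquiv hd).symm i with hj
      have hval : ((isoEquiv hd j : IsolPts Yb) : Yb) = u :=
        congrArg Subtype.val ((isoEquiv hd).apply_symm_apply i)
      obtain ⟨a, ha⟩ := hAne (isoEquiv hd j)
      refine ⟨zoomIncl (Xb := Xb) hd A (Sum.inr ⟨j, ⟨a, ha⟩⟩), hsub ?_, Set.mem_range_self _⟩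
      show ((isoEquiv hd j : IsolPts Yb) : Yb) ∈ U
      rw [hval]
      exact huU
    · have hnotiso : (⟨u, huYs⟩ : ↥Ys) ∉ IsolPts ↥Ys :=
        fun h => hiso ((isol_sub_iff hd _).mp h)
      exact ⟨zoomIncl (Xb := Xb) hd A (Sum.inl ⟨⟨u, huYs⟩, hnotiso⟩), hsub huU,
        Set.mem_range_self _⟩
  | inr p =>
    obtain ⟨i, x⟩ := p
    obtain ⟨W, hW, hxW, hsub⟩ := exists_copy_subset hO hz
    obtain ⟨a, haW, haA⟩ := (hAd i).inter_open_nonempty W hW ⟨x, hxW⟩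
    obtain ⟨j, rfl⟩ : ∃ j, isoEquiv hd j = i :=
      ⟨(isoEquiv hd).symm i, (isoEquiv hd).apply_symm_apply i⟩
    refine ⟨zoomIncl (Xb := Xb) hd A (Sum.inr ⟨j, ⟨a, haA⟩⟩), hsub ?_, Set.mem_range_self _⟩
    exact mem_copyGen_self.mpr haW

end ZoomHelpers5

/-- Basic properties of zoom spaces: (i) `Z(Y, X)` is Tychonoff, `Y` is
a quotient of it, each `X i` is homeomorphic to a clopen subspace, and for each selector
`s` the set `(Y ∖ I_Y) ∪ s(I_Y)` is a closed copy of `Y`; (ii) the zoom space of dense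
subspaces embeds (densely) into the zoom space; (iii) zoom spaces of compact (Lindelöf)
spaces are compact (Lindelöf); (iv) zoom spaces of compactifications are
compactifications of the zoom space. -/
theorem zoom_space_basic_properties :
    -- (i)
    (∀ (Y : Type u) (_ : TopologicalSpace Y) (_ : T35Space Y)
        (X : IsolPts Y → Type u) (_ : ∀ i, TopologicalSpace (X i))
        (_ : ∀ i, T35Space (X i)) (_ : ∀ i, Nonempty (X i)),
      T35Space (ZoomCarrier Y X) ∧
      (∃ q : ZoomCarrier Y X → Y, IsQuotientMap q) ∧
      (∀ i : IsolPts Y, ∃ e : X i → ZoomCarrier Y X,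
          IsEmbedding e ∧ IsClopen (Set.range e)) ∧
      (∀ s : (i : IsolPts Y) → X i, ∃ e : Y → ZoomCarrier Y X,
          IsClosedEmbedding e ∧
          Set.range e =
            Set.range (Sum.inl : { y : Y // y ∉ IsolPts Y } → ZoomCarrier Y X) ∪
            Set.range (fun i : IsolPts Y => (Sum.inr ⟨i, s i⟩ : ZoomCarrier Y X)))) ∧
    -- (ii)
    (∀ (Yb : Type u) (_ : TopologicalSpace Yb) (_ : T35Space Yb)
        (Xb : IsolPts Yb → Type u) (_ : ∀ i, TopologicalSpace (Xb i))
        (_ : ∀ i, T35Space (Xb i))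
        (Ys : Set Yb) (_ : Dense Ys)
        (A : ∀ i : IsolPts Yb, Set (Xb i)) (_ : ∀ i, (A i).Nonempty),
      ∃ ι : IsolPts (↥Ys) ≃ IsolPts Yb,
        (∀ j : IsolPts (↥Ys), ((ι j : Yb)) = ((j : ↥Ys) : Yb)) ∧
        ∃ e : ZoomCarrier ↥Ys (fun j => ↥(A (ι j))) → ZoomCarrier Yb Xb,
          IsEmbedding e ∧ ((∀ i, Dense (A i)) → DenseRange e)) ∧
    -- (iii)
    (∀ (Y : Type u) (_ : TopologicalSpace Y) (_ : T35Space Y)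
        (X : IsolPts Y → Type u) (_ : ∀ i, TopologicalSpace (X i))
        (_ : ∀ i, T35Space (X i)) (_ : ∀ i, Nonempty (X i)),
      (CompactSpace Y → (∀ i, CompactSpace (X i)) → CompactSpace (ZoomCarrier Y X)) ∧
      (LindelofSpace Y → (∀ i, LindelofSpace (X i)) → LindelofSpace (ZoomCarrier Y X))) ∧
    -- (iv)
    (∀ (cY : Type u) (_ : TopologicalSpace cY) (_ : CompactSpace cY) (_ : T2Space cY)
        (Xb : IsolPts cY → Type u) (_ : ∀ i, TopologicalSpace (Xb i))
        (_ : ∀ i, CompactSpace (Xb i)) (_ : ∀ i, T2Space (Xb i))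
        (Ys : Set cY) (_ : Dense Ys)
        (A : ∀ i : IsolPts cY, Set (Xb i)) (_ : ∀ i, (A i).Nonempty)
        (_ : ∀ i, Dense (A i)),
      CompactSpace (ZoomCarrier cY Xb) ∧ T2Space (ZoomCarrier cY Xb) ∧
      ∃ ι : IsolPts (↥Ys) ≃ IsolPts cY,
        (∀ j : IsolPts (↥Ys), ((ι j : cY)) = ((j : ↥Ys) : cY)) ∧
        ∃ e : ZoomCarrier ↥Ys (fun j => ↥(A (ι j))) → ZoomCarrier cY Xb,
          IsEmbedding e ∧ DenseRange e) := by
  refine ⟨?_, ?_, ?_, ?_⟩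
  · -- (i)
    intro Y _ _ X _ _ _
    refine ⟨t35Space_zoom, ⟨zproj Y X, isQuotientMap_zproj⟩, ?_, ?_⟩
    · intro i
      exact ⟨copyEmb i, (isOpenEmbedding_copyEmb i).isEmbedding,
        isClosed_range_copyEmb i, (isOpenEmbedding_copyEmb i).isOpen_range⟩
    · intro s
      exact ⟨selEmb s, ⟨isEmbedding_selEmb s, isClosed_range_selEmb s⟩, range_selEmb_eq s⟩
  · -- (ii)
    intro Yb _ _ Xb _ _ Ys hd A hAne
    exact ⟨isoEquiv hd, fun j => rfl, zoomIncl hd A, zoomIncl_isEmbedding hd A,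
      fun hAd => zoomIncl_denseRange hd A hAne hAd⟩
  · -- (iii)
    intro Y _ _ X _ _ _
    constructor
    · intro hY hX
      exact compactSpace_zoom
    · intro hY hX
      exact lindelofSpace_zoom
  · -- (iv)
    intro cY _ _ _ Xb _ _ _ Ys hd A hAne hAd
    exact ⟨compactSpace_zoom, t2Space_zoom, isoEquiv hd, fun j => rfl, zoomIncl hd A,
      zoomIncl_isEmbedding hd A, zoomIncl_denseRange hd A hAne hAd⟩

end FBorelPaper
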